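/- (Core of Theorem 11: redundancy of the sum-rate bound, so inner and outer Gaussian bounds coincide.) For x ≥ 0, let C(x) = (1/2)·log₂(1+x). Let s₁, s₂, s_e be real numbers with 0 < s₁ ≤ s₂ ≤ s_e, and let P > 0 satisfy P ≥ s_e(s_e − 2s₂)/s₂. Let α ∈ [0, 1] and R₁, R₂ ≥ 0 satisfy R₁ ≤ C(αP/s₁) − C(αP/s_e) + C((1−α)P/(αP + s₂)) − C((1−α)P/(αP + s_e)) and R₂ ≤ C((1−α)P/(αP + s₂)) − C((1−α)P/(αP + s_e)). Then R₁ + R₂ ≤ C(αP/s₁) − C(αP/s_e) + C((1−α)P/(αP + s₂)). -/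

import Mathlib

/-- The Gaussian capacity function `C(x) = (1/2)·log₂(1+x)`. -/
noncomputable def Cfun (x : ℝ) : ℝ := (1 / 2) * Real.logb 2 (1 + x)

/-- Core of Theorem 11: under the power condition `P ≥ s_e(s_e−2s₂)/s₂`, the sum-rate
bound of the inner region (55) is implied by the two individual rate bounds, so the
inner and outer Gaussian bounds coincide. -/
theorem sum_rate_redundant
    (s₁ s₂ se P α R₁ R₂ : ℝ)
    (hs₁ : 0 < s₁) (h12 : s₁ ≤ s₂) (h2e : s₂ ≤ se) (hP : 0 < P)
    (hpow : P ≥ se * (se - 2 * s₂) / s₂)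
    (hα : α ∈ Set.Icc (0 : ℝ) 1) (hR₁0 : 0 ≤ R₁) (hR₂0 : 0 ≤ R₂)
    (hR₁ : R₁ ≤ Cfun (α * P / s₁) - Cfun (α * P / se)
        + Cfun ((1 - α) * P / (α * P + s₂)) - Cfun ((1 - α) * P / (α * P + se)))
    (hR₂ : R₂ ≤ Cfun ((1 - α) * P / (α * P + s₂)) - Cfun ((1 - α) * P / (α * P + se))) :
    R₁ + R₂ ≤ Cfun (α * P / s₁) - Cfun (α * P / se)
        + Cfun ((1 - α) * P / (α * P + s₂)) := by
  obtain ⟨hα0, hα1⟩ := hα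
  have hs₂ : 0 < s₂ := lt_of_lt_of_le hs₁ h12
  have hse : 0 < se := lt_of_lt_of_le hs₂ h2e
  have hαP : 0 ≤ α * P := mul_nonneg hα0 hP.le
  have hd2 : 0 < α * P + s₂ := by linarith
  have hde : 0 < α * P + se := by linarith
  have hQ : 0 ≤ (1 - α) * P := mul_nonneg (by linarith) hP.le
  have hpow' : s₂ * P ≥ se * (se - 2 * s₂) := by
    have := (ge_iff_le).mp hpow
    calc se * (se - 2 * s₂) = (se * (se - 2 * s₂) / s₂) * s₂ := by field_simp
    _ ≤ P * s₂ := by exact mul_le_mul_of_nonneg_right this hs₂.le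
    _ = s₂ * P := by ring
  set b := (1 - α) * P / (α * P + s₂) with hb
  set e := (1 - α) * P / (α * P + se) with he
  have hb0 : 0 ≤ b := div_nonneg hQ hd2.le
  have he0 : 0 ≤ e := div_nonneg hQ hde.le
  have h1b : 1 + b = (P + s₂) / (α * P + s₂) := by
    rw [hb, eq_div_iff hd2.ne', add_mul, div_mul_cancel₀ _ hd2.ne']; ring
  have h1e : 1 + e = (P + se) / (α * P + se) := by
    rw [he, eq_div_iff hde.ne', add_mul, div_mul_cancel₀ _ hde.ne']; ring
  have hkey : 1 + b ≤ (1 + e) ^ 2 := by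
    rw [h1b, h1e, div_pow, div_le_div_iff₀ hd2 (by positivity)]
    nlinarith [mul_nonneg (mul_nonneg hα0 (by linarith : (0:ℝ) ≤ 1 - α)) (mul_pos hP hP).le,
      mul_nonneg (mul_nonneg (by linarith : (0:ℝ) ≤ 1 - α) hP.le)
        (by linarith : (0:ℝ) ≤ s₂ * P - se * (se - 2 * s₂)),
      mul_pos hP hP, sq_nonneg (α * P), mul_nonneg hα0 hP.le]
  have hlog : Real.logb 2 (1 + b) ≤ 2 * Real.logb 2 (1 + e) := by
    have h2 : Real.logb 2 ((1 + e) ^ 2) = 2 * Real.logb 2 (1 + e) := by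
      rw [Real.logb, Real.logb, Real.log_pow]; push_cast; ring
    calc Real.logb 2 (1 + b) ≤ Real.logb 2 ((1 + e) ^ 2) :=
          Real.logb_le_logb_of_le (by norm_num : (1:ℝ) < 2) (by linarith) hkey
      _ = 2 * Real.logb 2 (1 + e) := h2
  have hCb : Cfun b ≤ 2 * Cfun e := by
    simp only [Cfun]; linarith
  linarith
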